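/- For every integer K ≥ 2 and every real ε with 0 ≤ ε ≤ 1/2, one has (1−ε) · log( (1−ε)/(1+ε) ) + (K−1+ε) · log( (K−1+ε)/(K−1−ε) ) ≤ 10 ε². (This makes precise the paper's claim that this quantity is O(ε²) for small ε.) -/
import Mathlib


/-- For every integer `K ≥ 2` and real `0 ≤ ε ≤ 1/2`,
`(1-ε) log((1-ε)/(1+ε)) + (K-1+ε) log((K-1+ε)/(K-1-ε)) ≤ 10 ε²`. -/
theorem stmt_13 (K : ℕ) (hK : 2 ≤ K) (ε : ℝ) (hε0 : 0 ≤ ε) (hε1 : ε ≤ 1 / 2) :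
    (1 - ε) * Real.log ((1 - ε) / (1 + ε))
      + ((K : ℝ) - 1 + ε) * Real.log (((K : ℝ) - 1 + ε) / ((K : ℝ) - 1 - ε))
      ≤ 10 * ε ^ 2 := by
  have h1e : (0:ℝ) < 1 - ε := by linarith
  have h1p : (0:ℝ) < 1 + ε := by linarith
  rcases eq_or_lt_of_le hK with hK2 | hK3
  · -- K = 2
    have hKr : (K : ℝ) = 2 := by rw [← hK2]; norm_num
    rw [hKr]
    have e2 : (2:ℝ) - 1 + ε = 1 + ε := by ring
    have e3 : (2:ℝ) - 1 - ε = 1 - ε := by ring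
    rw [e2, e3]
    have hinv : (1 - ε)/(1+ε) = ((1+ε)/(1-ε))⁻¹ := by rw [inv_div]
    rw [hinv, Real.log_inv]
    set L := Real.log ((1+ε)/(1-ε)) with hL
    have hL0 : 0 ≤ L := Real.log_nonneg (by rw [le_div_iff₀ h1e]; linarith)
    have hLu : L ≤ (1+ε)/(1-ε) - 1 :=
      Real.log_le_sub_one_of_pos (by positivity)
    have hfr : (1+ε)/(1-ε) - 1 ≤ 1 + 4*ε - 1 := by
      have : (1+ε)/(1-ε) ≤ 1 + 4*ε := by
        rw [div_le_iff₀ h1e]; nlinarith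
      linarith
    nlinarith [hLu, hfr, hL0, sq_nonneg ε]
  · -- K ≥ 3
    have hk2 : (2:ℝ) ≤ (K:ℝ) - 1 := by
      have : (3:ℕ) ≤ K := hK3
      have : (3:ℝ) ≤ (K:ℝ) := by exact_mod_cast this
      linarith
    set k := (K:ℝ) - 1 with hkdef
    have hkme : (0:ℝ) < k - ε := by linarith
    have hkpe : (0:ℝ) < k + ε := by linarith
    have l1 : Real.log ((1-ε)/(1+ε)) ≤ -(2*ε)/(1+ε) := by
      have h := Real.log_le_sub_one_of_pos (show (0:ℝ) < (1-ε)/(1+ε) by positivity)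
      have e : (1-ε)/(1+ε) - 1 = -(2*ε)/(1+ε) := by field_simp; ring
      linarith [e ▸ h]
    have l2 : Real.log ((k+ε)/(k-ε)) ≤ (2*ε)/(k-ε) := by
      have h := Real.log_le_sub_one_of_pos (show (0:ℝ) < (k+ε)/(k-ε) by positivity)
      have e : (k+ε)/(k-ε) - 1 = (2*ε)/(k-ε) := by field_simp; ring
      linarith [e ▸ h]
    have b1 : (1 - ε) * Real.log ((1-ε)/(1+ε)) ≤ (1-ε) * (-(2*ε)/(1+ε)) :=
      mul_le_mul_of_nonneg_left l1 (le_of_lt h1e)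
    have b2 : (k + ε) * Real.log ((k+ε)/(k-ε)) ≤ (k+ε) * ((2*ε)/(k-ε)) :=
      mul_le_mul_of_nonneg_left l2 (le_of_lt hkpe)
    have final : (1-ε) * (-(2*ε)/(1+ε)) + (k+ε) * ((2*ε)/(k-ε))
        ≤ 10 * ε ^ 2 := by
      have eq1 : (1-ε) * (-(2*ε)/(1+ε)) + (k+ε) * ((2*ε)/(k-ε))
          = (4*ε^2*(k+1)) / ((1+ε)*(k-ε)) := by
        field_simp; ring
      rw [eq1, div_le_iff₀ (by positivity)]
      nlinarith [sq_nonneg ε, mul_nonneg (sq_nonneg ε) (by linarith : (0:ℝ) ≤ k - 2),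
        mul_nonneg (sq_nonneg ε) hε0, mul_nonneg (mul_nonneg (sq_nonneg ε) hε0) (by linarith : (0:ℝ) ≤ k - ε)]
    linarith [b1, b2, final]
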